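/- Let μ be a fuzzy set of an MTL-algebra L. Then μ is an (∈̄,∈̄∨q̄)-fuzzy Boolean filter of L if and only if for every t ∈ (0.5, 1] the ∈-level set F(t) = {x ∈ L : μ(x) ≥ t} is either empty or a Boolean filter of L. -/
import Mathlib


/-- An MTL-algebra: a bounded lattice with `⊥ ≠ ⊤`, a product `odot` and residuum `rimp`,
where `odot` is associative, commutative and monotone in each argument, `⊤` is a unit,
the Galois correspondence holds and prelinearity holds. -/
class MTL (L : Type*) extends Lattice L, BoundedOrder L where
  odot : L → L → L
  rimp : L → L → L
  bot_ne_top : (⊥ : L) ≠ ⊤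
  odot_assoc : ∀ x y z : L, odot (odot x y) z = odot x (odot y z)
  odot_comm : ∀ x y : L, odot x y = odot y x
  odot_mono_left : ∀ x y z : L, x ≤ y → odot x z ≤ odot y z
  odot_mono_right : ∀ x y z : L, x ≤ y → odot z x ≤ odot z y
  odot_top : ∀ x : L, odot x ⊤ = x
  galois : ∀ x y z : L, odot x y ≤ z ↔ x ≤ rimp y z
  prelinear : ∀ x y : L, rimp x y ⊔ rimp y x = ⊤

open MTL

variable {L : Type*} [MTL L]

/-- A subset `A` is a filter: `1 ∈ A` and it is closed under modus ponens. -/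
def IsFilter' (A : Set L) : Prop :=
  (⊤ : L) ∈ A ∧ ∀ x y : L, x ∈ A → rimp x y ∈ A → y ∈ A

/-- An (∈̄,∈̄∨q̄)-fuzzy filter: `max(μ(1), 0.5) ≥ μ(x)` and
`max(μ(y), 0.5) ≥ min(μ(x → y), μ(x))`. -/
def IsBarFuzzyFilter (μ : L → ℝ) : Prop :=
  (∀ x : L, max (μ ⊤) (1/2) ≥ μ x) ∧
    ∀ x y : L, max (μ y) (1/2) ≥ min (μ (rimp x y)) (μ x)

/-- A Boolean filter: a filter containing `x ∨ x'` for all `x`, where `x' = x → 0`. -/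
def IsBooleanFilter (A : Set L) : Prop :=
  IsFilter' A ∧ ∀ x : L, x ⊔ rimp x ⊥ ∈ A

/-- An (∈̄,∈̄∨q̄)-fuzzy Boolean filter:
`max(μ(x → z), 0.5) ≥ min(μ(x → (z' → y)), μ(y → z))`. -/
def IsBarFuzzyBooleanFilter (μ : L → ℝ) : Prop :=
  IsBarFuzzyFilter μ ∧
    ∀ x y z : L, max (μ (rimp x z)) (1/2) ≥
      min (μ (rimp x (rimp (rimp z ⊥) y))) (μ (rimp y z))


section Aux
variable {L : Type*} [MTL L]

lemma odot_le_l (x y : L) : odot x y ≤ x := by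
  calc odot x y ≤ odot x ⊤ := odot_mono_right _ _ _ le_top
  _ = x := odot_top x

lemma mp_le (x y : L) : odot (rimp x y) x ≤ y :=
  (galois _ _ _).mpr le_rfl

lemma rimp_top_of_le {x y : L} (h : x ≤ y) : rimp x y = (⊤ : L) :=
  le_antisymm le_top ((galois ⊤ x y).mp (by rw [odot_comm, odot_top]; exact h))

lemma rimp_top_left (x : L) : rimp (⊤ : L) x = x := by
  apply le_antisymm
  · have := mp_le (⊤ : L) x
    rwa [odot_top] at this
  · exact (galois x ⊤ x).mp (by rw [odot_top])

lemma rimp_antitone {x y : L} (h : x ≤ y) (z : L) : rimp y z ≤ rimp x z :=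
  (galois _ _ _).mp (le_trans (odot_mono_right _ _ _ h) (mp_le y z))

lemma le_rimp2 (u x y z : L) : u ≤ rimp x (rimp y z) ↔ odot u (odot x y) ≤ z := by
  rw [← galois, ← galois, odot_assoc]

lemma rimp_exchange (x y z : L) : rimp x (rimp y z) = rimp y (rimp x z) := by
  apply le_antisymm
  · rw [le_rimp2, odot_comm y x]
    exact (le_rimp2 _ x y z).mp le_rfl
  · rw [le_rimp2, odot_comm x y]
    exact (le_rimp2 _ y x z).mp le_rfl

lemma B_le (u y z : L) : rimp y z ≤ rimp (rimp u y) (rimp u z) := by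
  rw [le_rimp2]
  exact le_trans (odot_mono_right _ _ _ (mp_le u y)) (mp_le y z)

lemma mem_of_le {A : Set L} (hA : IsFilter' A) {a b : L} (ha : a ∈ A) (h : a ≤ b) : b ∈ A :=
  hA.2 a b ha (by rw [rimp_top_of_le h]; exact hA.1)

lemma boolean_mp {A : Set L} (hA : IsBooleanFilter A) {x y z : L}
    (h1 : rimp x (rimp (rimp z ⊥) y) ∈ A) (h2 : rimp y z ∈ A) : rimp x z ∈ A := by
  set z' := rimp z ⊥ with hz'
  set w := rimp x z with hw
  rw [rimp_exchange] at h1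
  have hB2 : rimp (rimp x y) w ∈ A := mem_of_le hA.1 h2 (B_le x y z)
  have h3 : rimp z' w ∈ A :=
    hA.1.2 _ _ h1 (mem_of_le hA.1 hB2 (B_le z' (rimp x y) w))
  have hzw : z ≤ w := (galois z x z).mp (odot_le_l z x)
  have hsup : z ⊔ z' ≤ rimp (rimp z' w) w := by
    apply sup_le
    · exact (galois z (rimp z' w) w).mp (le_trans (odot_le_l z _) hzw)
    · exact (galois z' (rimp z' w) w).mp (by rw [odot_comm]; exact mp_le z' w)
  have key : rimp z' w ≤ rimp (z ⊔ z') w := by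
    apply (galois _ _ _).mp
    rw [odot_comm]
    exact (galois _ _ _).mpr hsup
  exact hA.1.2 (z ⊔ z') w (hA.2 z) (mem_of_le hA.1 h3 key)

end Aux

theorem stmt_10 (μ : L → ℝ) (hμ0 : ∀ x : L, 0 ≤ μ x) (hμ1 : ∀ x : L, μ x ≤ 1) :
    IsBarFuzzyBooleanFilter μ ↔ (∀ t : ℝ, 1/2 < t → t ≤ 1 → ({x : L | t ≤ μ x} = ∅ ∨ IsBooleanFilter {x : L | t ≤ μ x})) := by
  constructor
  · rintro ⟨⟨hf1, hf2⟩, hb⟩ t ht hlt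
    by_cases hne : {x : L | t ≤ μ x} = ∅
    · exact Or.inl hne
    right
    obtain ⟨a, ha⟩ := Set.nonempty_iff_ne_empty.mpr hne
    have htop : t ≤ μ ⊤ := by
      have := hf1 a
      rcases le_max_iff.mp (le_trans ha this) with h | h
      · exact h
      · linarith
    have hfil : IsFilter' {x : L | t ≤ μ x} := by
      refine ⟨htop, fun x y hx hxy => ?_⟩
      have := hf2 x y
      have hmin : t ≤ min (μ (rimp x y)) (μ x) := le_min hxy hx
      rcases le_max_iff.mp (le_trans hmin this) with h | h
      · exact h
      · linarith
    refine ⟨hfil, fun a => ?_⟩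
    set z := a ⊔ rimp a ⊥ with hz
    have hz'z : rimp (rimp z ⊥) z = ⊤ := by
      apply rimp_top_of_le
      exact le_trans (rimp_antitone le_sup_left ⊥) le_sup_right
    have := hb ⊤ z z
    rw [rimp_top_left, hz'z, rimp_top_left, rimp_top_of_le (le_refl z)] at this
    have hmin : t ≤ min (μ (⊤ : L)) (μ (⊤ : L)) := le_min htop htop
    rcases le_max_iff.mp (le_trans hmin this) with h | h
    · exact h
    · linarith
  · intro h
    have getBF : ∀ t : ℝ, 1/2 < t → t ≤ 1 → ∀ a : L, t ≤ μ a →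
        IsBooleanFilter {x : L | t ≤ μ x} := by
      intro t ht hlt a ha
      rcases h t ht hlt with he | hbf
      · exact absurd he (Set.nonempty_iff_ne_empty.mp ⟨a, ha⟩)
      · exact hbf
    refine ⟨⟨fun x => ?_, fun x y => ?_⟩, fun x y z => ?_⟩
    · by_contra hc
      push_neg at hc
      have ht : 1/2 < μ x := lt_of_le_of_lt (le_max_right _ _) hc
      have hbf := getBF (μ x) ht (hμ1 x) x le_rfl
      have := hbf.1.1
      simp only [Set.mem_setOf_eq] at this
      have := lt_of_le_of_lt (le_max_left (μ ⊤) (1/2)) hc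
      linarith
    · by_contra hc
      push_neg at hc
      set t := min (μ (rimp x y)) (μ x) with htd
      have ht : 1/2 < t := lt_of_le_of_lt (le_max_right _ _) hc
      have hbf := getBF t ht (le_trans (min_le_right _ _) (hμ1 x)) x (min_le_right _ _)
      have hy : y ∈ {u : L | t ≤ μ u} :=
        hbf.1.2 x y (by simp only [Set.mem_setOf_eq]; exact min_le_right _ _)
          (by simp only [Set.mem_setOf_eq]; exact min_le_left _ _)
      simp only [Set.mem_setOf_eq] at hy
      have := lt_of_le_of_lt (le_max_left (μ y) (1/2)) hc
      linarith
    · by_contra hc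
      push_neg at hc
      set t := min (μ (rimp x (rimp (rimp z ⊥) y))) (μ (rimp y z)) with htd
      have ht : 1/2 < t := lt_of_le_of_lt (le_max_right _ _) hc
      have hbf := getBF t ht (le_trans (min_le_right _ _) (hμ1 _)) _ (min_le_right _ _)
      have hxz : rimp x z ∈ {u : L | t ≤ μ u} :=
        boolean_mp hbf (by simp only [Set.mem_setOf_eq]; exact min_le_left _ _)
          (by simp only [Set.mem_setOf_eq]; exact min_le_right _ _)
      simp only [Set.mem_setOf_eq] at hxz
      have := lt_of_le_of_lt (le_max_left (μ (rimp x z)) (1/2)) hc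
      linarith
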